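/- For all real a, b with 0 < a < 1 and 0 < b < 1, the absolute difference between ∫₀¹ dx / (√(1 − x²) √(a + 1 − x) √(b + 1 + x)) and ∫₀¹ dx / (√(1 − x²) √(a + 1 − x) √(1 + x)) is at most (b/2)(log(4/a) + a/2). -/

import Mathlib

open Real MeasureTheory

lemma stmt8_rpow_half_eq {y : ℝ} (h : 0 ≤ y) : y ^ (-(1:ℝ)/2) = 1 / Real.sqrt y := by
  rw [Real.sqrt_eq_rpow, neg_div, Real.rpow_neg h, one_div]
  norm_num

lemma stmt8_intOn_pow : IntegrableOn (fun x : ℝ => (1 - x) ^ (-(1:ℝ)/2)) (Set.Ioo 0 1) volume := by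
  have h1 : IntervalIntegrable (fun x : ℝ => x ^ (-(1:ℝ)/2)) volume 0 1 :=
    intervalIntegral.intervalIntegrable_rpow' (by norm_num)
  have h2 : IntervalIntegrable (fun x : ℝ => (1 - x) ^ (-(1:ℝ)/2)) volume 0 1 := by
    have := (h1.comp_sub_left 1).symm
    norm_num at this ⊢
    exact this
  exact (intervalIntegrable_iff_integrableOn_Ioo_of_le (by norm_num)).mp h2

lemma stmt8_integrable_h (a : ℝ) (ha : 0 < a) :
    IntegrableOn (fun x : ℝ => 1 / (Real.sqrt (1 - x) * Real.sqrt (a + 1 - x)))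
      (Set.Ioo 0 1) volume := by
  apply Integrable.mono' (stmt8_intOn_pow.const_mul (1 / Real.sqrt a))
  · apply Measurable.aestronglyMeasurable
    exact measurable_const.div ((measurable_const.sub measurable_id).sqrt.mul
      ((measurable_const.sub measurable_id).sqrt))
  · rw [ae_restrict_iff' measurableSet_Ioo]
    filter_upwards with x hx
    obtain ⟨hx0, hx1⟩ := hx
    have h1 : (0:ℝ) < 1 - x := by linarith
    have h2 : Real.sqrt a ≤ Real.sqrt (a + 1 - x) := Real.sqrt_le_sqrt (by linarith)
    have hsa : 0 < Real.sqrt a := Real.sqrt_pos.mpr ha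
    have hs1 : 0 < Real.sqrt (1 - x) := Real.sqrt_pos.mpr h1
    rw [Real.norm_eq_abs, abs_of_nonneg (by positivity), stmt8_rpow_half_eq h1.le]
    rw [div_mul_div_comm, one_mul, mul_comm (Real.sqrt a)]
    exact one_div_le_one_div_of_le (by positivity) (mul_le_mul_of_nonneg_left h2 hs1.le)

lemma stmt8_integrable_f (a b : ℝ) (ha : 0 < a) (hb : 0 ≤ b) :
    IntegrableOn (fun x : ℝ =>
      1 / (Real.sqrt (1 - x ^ 2) * Real.sqrt (a + 1 - x) * Real.sqrt (b + 1 + x)))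
      (Set.Ioo 0 1) volume := by
  apply Integrable.mono' (stmt8_intOn_pow.const_mul (1 / Real.sqrt a))
  · apply Measurable.aestronglyMeasurable
    fun_prop
  · rw [ae_restrict_iff' measurableSet_Ioo]
    filter_upwards with x hx
    obtain ⟨hx0, hx1⟩ := hx
    have h1 : (0:ℝ) < 1 - x := by linarith
    have h2 : Real.sqrt a ≤ Real.sqrt (a + 1 - x) := Real.sqrt_le_sqrt (by linarith)
    have hsa : 0 < Real.sqrt a := Real.sqrt_pos.mpr ha
    have hs1 : 0 < Real.sqrt (1 - x) := Real.sqrt_pos.mpr h1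
    have e1 : 1 ≤ Real.sqrt (1 + x) := Real.one_le_sqrt.mpr (by linarith)
    have e2 : 1 ≤ Real.sqrt (b + 1 + x) := Real.one_le_sqrt.mpr (by linarith)
    have hsq : Real.sqrt (1 - x ^ 2) = Real.sqrt (1 - x) * Real.sqrt (1 + x) := by
      rw [show (1 - x ^ 2) = (1 - x) * (1 + x) by ring, Real.sqrt_mul h1.le]
    rw [Real.norm_eq_abs, abs_of_nonneg (by positivity), stmt8_rpow_half_eq h1.le]
    rw [div_mul_div_comm, one_mul, hsq]
    apply one_div_le_one_div_of_le (by positivity)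
    calc Real.sqrt a * Real.sqrt (1 - x)
        = Real.sqrt (1 - x) * 1 * Real.sqrt a * 1 := by ring
      _ ≤ Real.sqrt (1 - x) * Real.sqrt (1 + x) * Real.sqrt (a + 1 - x) * Real.sqrt (b + 1 + x) := by
          gcongr

lemma stmt8_integral_h (a : ℝ) (ha : 0 < a) :
    ∫ x in (0:ℝ)..1, 1 / (Real.sqrt (1 - x) * Real.sqrt (a + 1 - x)) =
      2 * Real.log (1 + Real.sqrt (a + 1)) - 2 * Real.log (Real.sqrt a) := by
  have key := intervalIntegral.integral_eq_sub_of_hasDerivAt_of_le (f := fun x =>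
      -2 * Real.log (Real.sqrt (1 - x) + Real.sqrt (a + 1 - x)))
      (f' := fun x => 1 / (Real.sqrt (1 - x) * Real.sqrt (a + 1 - x)))
      (by norm_num : (0:ℝ) ≤ 1)
      ?_ ?_ ?_
  · rw [key]
    norm_num
    ring
  · apply ContinuousOn.mul continuousOn_const
    apply ContinuousOn.log
    · exact ((continuous_const.sub continuous_id).sqrt.add
        (continuous_const.sub continuous_id).sqrt).continuousOn
    · intro x hx
      have : 0 < Real.sqrt (a + 1 - x) := Real.sqrt_pos.mpr (by
        simp only [Set.mem_Icc] at hx; linarith [hx.2])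
      have h0 : 0 ≤ Real.sqrt (1 - x) := Real.sqrt_nonneg _
      linarith
  · intro x hx
    obtain ⟨hx0, hx1⟩ := hx
    have h1 : (0:ℝ) < 1 - x := by linarith
    have h2 : (0:ℝ) < a + 1 - x := by linarith
    have hs : 0 < Real.sqrt (1 - x) := Real.sqrt_pos.mpr h1
    have ht : 0 < Real.sqrt (a + 1 - x) := Real.sqrt_pos.mpr h2
    have d1 : HasDerivAt (fun y : ℝ => Real.sqrt (1 - y))
        (1 / (2 * Real.sqrt (1 - x)) * (-1)) x := by
      exact (Real.hasDerivAt_sqrt h1.ne').comp x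
        ((hasDerivAt_id x).const_sub 1)
    have d2 : HasDerivAt (fun y : ℝ => Real.sqrt (a + 1 - y))
        (1 / (2 * Real.sqrt (a + 1 - x)) * (-1)) x := by
      exact (Real.hasDerivAt_sqrt h2.ne').comp x
        ((hasDerivAt_id x).const_sub (a + 1))
    have d3 := (d1.add d2).log (ne_of_gt (add_pos hs ht))
    have d4 := d3.const_mul (-2 : ℝ)
    refine d4.congr_deriv ?_
    have hsum : Real.sqrt (1 - x) + Real.sqrt (a + 1 - x) ≠ 0 := by positivity
    simp only [Pi.add_apply]
    field_simp
    ring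
  · exact (intervalIntegrable_iff_integrableOn_Ioo_of_le (by norm_num)).mpr
      (stmt8_integrable_h a ha)

lemma stmt8_pointwise_bd (a b x : ℝ) (ha : 0 < a) (hb : 0 < b) (hx : x ∈ Set.Ioo (0:ℝ) 1) :
    ‖1 / (Real.sqrt (1 - x ^ 2) * Real.sqrt (a + 1 - x) * Real.sqrt (b + 1 + x)) -
      1 / (Real.sqrt (1 - x ^ 2) * Real.sqrt (a + 1 - x) * Real.sqrt (1 + x))‖ ≤
    (b / 2) * (1 / (Real.sqrt (1 - x) * Real.sqrt (a + 1 - x))) := by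
  obtain ⟨hx0, hx1⟩ := hx
  have h1 : (0:ℝ) < 1 - x := by linarith
  set s := Real.sqrt (1 - x) with hs_def
  set C := Real.sqrt (1 + x) with hC_def
  set T := Real.sqrt (a + 1 - x) with hT_def
  set B := Real.sqrt (b + 1 + x) with hB_def
  have hs : 0 < s := Real.sqrt_pos.mpr h1
  have hT : 0 < T := Real.sqrt_pos.mpr (by linarith)
  have hC1 : 1 ≤ C := Real.one_le_sqrt.mpr (by linarith)
  have hB1 : 1 ≤ B := Real.one_le_sqrt.mpr (by linarith)
  have hCB : C ≤ B := Real.sqrt_le_sqrt (by linarith)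
  have hC : 0 < C := by linarith
  have hB : 0 < B := by linarith
  have hB2 : B ^ 2 = b + 1 + x := Real.sq_sqrt (by linarith)
  have hC2 : C ^ 2 = 1 + x := Real.sq_sqrt (by linarith)
  have hsq : Real.sqrt (1 - x ^ 2) = s * C := by
    rw [hs_def, hC_def, ← Real.sqrt_mul h1.le]
    ring_nf
  rw [hsq, Real.norm_eq_abs, abs_of_nonpos, neg_sub]
  · have e1 : 1 / (s * C * T * C) - 1 / (s * C * T * B) = (B - C) / (s * C * T * C * B) := by
      field_simp
    rw [e1]
    rw [show (b / 2) * (1 / (s * T)) = b / (2 * (s * T)) by ring]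
    rw [div_le_div_iff₀ (by positivity) (by positivity)]
    have key : (B - C) * 2 ≤ (B ^ 2 - C ^ 2) * (C ^ 2 * B) := by
      have h2 : 2 ≤ (B + C) * (C ^ 2 * B) := by
        have hA : 2 ≤ B + C := by linarith
        have hD : 1 ≤ C ^ 2 * B := by nlinarith
        nlinarith
      have h3 : (B - C) * 2 ≤ (B - C) * ((B + C) * (C ^ 2 * B)) :=
        mul_le_mul_of_nonneg_left h2 (by linarith)
      nlinarith [h3]
    have hbBC : b = B ^ 2 - C ^ 2 := by rw [hB2, hC2]; ring
    calc (B - C) * (2 * (s * T)) = ((B - C) * 2) * (s * T) := by ring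
      _ ≤ ((B ^ 2 - C ^ 2) * (C ^ 2 * B)) * (s * T) :=
          mul_le_mul_of_nonneg_right key (by positivity)
      _ = b * (s * C * T * C * B) := by rw [hbBC]; ring
  · have : 1 / (s * C * T * B) ≤ 1 / (s * C * T * C) :=
      one_div_le_one_div_of_le (by positivity) (mul_le_mul_of_nonneg_left hCB (by positivity))
    linarith

lemma stmt8_log_bd (a : ℝ) (ha : 0 < a) :
    2 * Real.log (1 + Real.sqrt (a + 1)) - 2 * Real.log (Real.sqrt a) ≤
      Real.log (4 / a) + a / 2 := by
  rw [Real.log_sqrt ha.le, Real.log_div (by norm_num) ha.ne']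
  have h1 : Real.sqrt (a + 1) ≤ 1 + a / 2 := by
    rw [show (1 + a/2 : ℝ) = Real.sqrt ((1 + a/2) ^ 2) from (Real.sqrt_sq (by linarith)).symm]
    exact Real.sqrt_le_sqrt (by nlinarith)
  have h2 : Real.log (1 + Real.sqrt (a + 1)) ≤ Real.log (2 + a / 2) :=
    Real.log_le_log (by positivity) (by linarith)
  have h3 : Real.log (2 + a / 2) = Real.log 2 + Real.log (1 + a / 4) := by
    rw [← Real.log_mul (by norm_num) (by positivity)]
    ring_nf
  have h4 : Real.log (1 + a / 4) ≤ a / 4 := by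
    have := Real.log_le_sub_one_of_pos (show (0:ℝ) < 1 + a / 4 by positivity)
    linarith
  have h5 : Real.log 4 = 2 * Real.log 2 := by
    rw [show (4:ℝ) = 2 ^ 2 by norm_num, Real.log_pow]
    push_cast; ring
  linarith

theorem stmt8 (a b : ℝ) (ha : 0 < a) (ha1 : a < 1) (hb : 0 < b) (hb1 : b < 1) :
    |(∫ x in Set.Ioo (0:ℝ) 1,
        1 / (Real.sqrt (1 - x ^ 2) * Real.sqrt (a + 1 - x) * Real.sqrt (b + 1 + x))) -
      ∫ x in Set.Ioo (0:ℝ) 1,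
        1 / (Real.sqrt (1 - x ^ 2) * Real.sqrt (a + 1 - x) * Real.sqrt (1 + x))|
      ≤ (b / 2) * (Real.log (4 / a) + a / 2) := by
  have hf := stmt8_integrable_f a b ha hb.le
  have hg := stmt8_integrable_f a 0 ha le_rfl
  simp only [zero_add] at hg
  have hh := stmt8_integrable_h a ha
  have hbd2 : IntegrableOn
      (fun x : ℝ => (b / 2) * (1 / (Real.sqrt (1 - x) * Real.sqrt (a + 1 - x))))
      (Set.Ioo 0 1) volume := hh.const_mul _
  rw [← integral_sub hf hg]
  have step1 : |∫ x in Set.Ioo (0:ℝ) 1,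
      (1 / (Real.sqrt (1 - x ^ 2) * Real.sqrt (a + 1 - x) * Real.sqrt (b + 1 + x)) -
       1 / (Real.sqrt (1 - x ^ 2) * Real.sqrt (a + 1 - x) * Real.sqrt (1 + x)))| ≤
      ∫ x in Set.Ioo (0:ℝ) 1,
        ‖1 / (Real.sqrt (1 - x ^ 2) * Real.sqrt (a + 1 - x) * Real.sqrt (b + 1 + x)) -
         1 / (Real.sqrt (1 - x ^ 2) * Real.sqrt (a + 1 - x) * Real.sqrt (1 + x))‖ := by
    rw [← Real.norm_eq_abs]
    exact norm_integral_le_integral_norm _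
  have step2 : (∫ x in Set.Ioo (0:ℝ) 1,
        ‖1 / (Real.sqrt (1 - x ^ 2) * Real.sqrt (a + 1 - x) * Real.sqrt (b + 1 + x)) -
         1 / (Real.sqrt (1 - x ^ 2) * Real.sqrt (a + 1 - x) * Real.sqrt (1 + x))‖) ≤
      ∫ x in Set.Ioo (0:ℝ) 1,
        (b / 2) * (1 / (Real.sqrt (1 - x) * Real.sqrt (a + 1 - x))) := by
    apply integral_mono_ae ((hf.sub hg).norm) hbd2
    rw [Filter.EventuallyLE, ae_restrict_iff' measurableSet_Ioo]
    filter_upwards with x hx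
    exact stmt8_pointwise_bd a b x ha hb hx
  have step3 : (∫ x in Set.Ioo (0:ℝ) 1,
        (b / 2) * (1 / (Real.sqrt (1 - x) * Real.sqrt (a + 1 - x)))) =
      (b / 2) * ∫ x in Set.Ioo (0:ℝ) 1,
        1 / (Real.sqrt (1 - x) * Real.sqrt (a + 1 - x)) := integral_const_mul _ _
  have step4 : (∫ x in Set.Ioo (0:ℝ) 1,
        1 / (Real.sqrt (1 - x) * Real.sqrt (a + 1 - x))) =
      2 * Real.log (1 + Real.sqrt (a + 1)) - 2 * Real.log (Real.sqrt a) := by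
    rw [← integral_Ioc_eq_integral_Ioo, ← intervalIntegral.integral_of_le (by norm_num : (0:ℝ) ≤ 1)]
    exact stmt8_integral_h a ha
  have step5 : (b / 2) * (2 * Real.log (1 + Real.sqrt (a + 1)) - 2 * Real.log (Real.sqrt a)) ≤
      (b / 2) * (Real.log (4 / a) + a / 2) :=
    mul_le_mul_of_nonneg_left (stmt8_log_bd a ha) (by positivity)
  calc _ ≤ _ := step1
    _ ≤ _ := step2
    _ = _ := step3
    _ = (b / 2) * (2 * Real.log (1 + Real.sqrt (a + 1)) - 2 * Real.log (Real.sqrt a)) := by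
        rw [step4]
    _ ≤ _ := step5
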